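/- arXiv:2509.03096 — 10 statements merged into one kernel-verified Lean document; each statement's English description precedes it below -/
import Mathlib

section
/- For each fixed α ∈ (0,1), the bioreactor yield is strictly decreasing in the dilution rate: if 0 < d₁ < d₂, both d₁ and d₂ are in the domain of ψα⁻¹, and ψα⁻¹(d₂) < s_in (hence also ψα⁻¹(d₁) < s_in), then P_yield(α,d₂) < P_yield(α,d₁). -/
/-- Inverse of the Monod bacterial growth rate: `φ⁻¹(y) = ks·y/(φmax − y)`. -/
noncomputable def phiInv (φmax ks y : ℝ) : ℝ := ks * y / (φmax - y)

/-- Inverse of the Droop algal growth rate: `μ⁻¹(d) = qmin·μmax/(μmax − d)`. -/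
noncomputable def muInv (μmax qmin d : ℝ) : ℝ := qmin * μmax / (μmax - d)

/-- Inverse of the vitamin uptake rate: `ρ⁻¹(w) = kv·w/(ρmax − w)`. -/
noncomputable def rhoInv (ρmax kv w : ℝ) : ℝ := kv * w / (ρmax - w)

/-- `ψα⁻¹(d) = φ⁻¹(d/(1−α)) + ρ⁻¹(d·μ⁻¹(d))/(α·β·γ)`. -/
noncomputable def psiInv (φmax ks ρmax kv μmax qmin β γ α d : ℝ) : ℝ :=
  phiInv φmax ks (d / (1 - α)) +
    rhoInv ρmax kv (d * muInv μmax qmin d) / (α * β * γ)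

/-- `d` is in the domain of `ψα⁻¹`: `d/(1−α) < φmax`, `d < μmax`, `d·μ⁻¹(d) < ρmax`. -/
def inDom (φmax ρmax μmax qmin α d : ℝ) : Prop :=
  d / (1 - α) < φmax ∧ d < μmax ∧ d * muInv μmax qmin d < ρmax

/-- Bioreactor yield `P_yield(α,d) = α·β·γ·(s_in − ψα⁻¹(d))/(s_in·μ⁻¹(d))`. -/
noncomputable def Pyield (φmax ks ρmax kv μmax qmin β γ s_in α d : ℝ) : ℝ :=
  α * β * γ * (s_in - psiInv φmax ks ρmax kv μmax qmin β γ α d) /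
    (s_in * muInv μmax qmin d)

/-- saturating fraction `k y/(c−y)` is strictly increasing on `[0,c)`. -/
lemma frac_strict (k c y₁ y₂ : ℝ) (hk : 0 < k) (h0 : 0 ≤ y₁) (h12 : y₁ < y₂)
    (h2 : y₂ < c) : k * y₁ / (c - y₁) < k * y₂ / (c - y₂) := by
  rw [div_lt_div_iff₀ (by linarith) (by linarith)]
  nlinarith [mul_pos hk (mul_pos (show (0:ℝ) < c by linarith) (sub_pos.mpr h12))]

/-- for fixed `α ∈ (0,1)`, the yield is strictly decreasing in `d`. -/
theorem Pyield_strictAnti (φmax ks ρmax kv μmax qmin β γ s_in : ℝ)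
    (hφ : 0 < φmax) (hks : 0 < ks) (hρ : 0 < ρmax) (hkv : 0 < kv)
    (hμ : 0 < μmax) (hq : 0 < qmin) (hβ : 0 < β) (hγ : 0 < γ) (hs : 0 < s_in)
    (α : ℝ) (hα0 : 0 < α) (hα1 : α < 1)
    (d₁ d₂ : ℝ) (h₁ : 0 < d₁) (h₁₂ : d₁ < d₂)
    (hdom₁ : inDom φmax ρmax μmax qmin α d₁)
    (hdom₂ : inDom φmax ρmax μmax qmin α d₂)
    (hfeas : psiInv φmax ks ρmax kv μmax qmin β γ α d₂ < s_in) :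
    Pyield φmax ks ρmax kv μmax qmin β γ s_in α d₂ <
      Pyield φmax ks ρmax kv μmax qmin β γ s_in α d₁ := by
  obtain ⟨hd1φ, hd1μ, hd1ρ⟩ := hdom₁
  obtain ⟨hd2φ, hd2μ, hd2ρ⟩ := hdom₂
  have h1α : (0:ℝ) < 1 - α := by linarith
  have h₂ : 0 < d₂ := by linarith
  have habg : 0 < α * β * γ := by positivity
  -- muInv values
  have hm1pos : 0 < muInv μmax qmin d₁ := by
    unfold muInv; exact div_pos (by positivity) (by linarith)
  have hm2pos : 0 < muInv μmax qmin d₂ := by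
    unfold muInv; exact div_pos (by positivity) (by linarith)
  have hmlt : muInv μmax qmin d₁ < muInv μmax qmin d₂ := by
    unfold muInv
    exact div_lt_div_of_pos_left (by positivity) (by linarith) (by linarith)
  -- w values
  have hw1 : d₁ * muInv μmax qmin d₁ = qmin * μmax * d₁ / (μmax - d₁) := by
    unfold muInv; field_simp
  have hw2 : d₂ * muInv μmax qmin d₂ = qmin * μmax * d₂ / (μmax - d₂) := by
    unfold muInv; field_simp
  have hwlt : d₁ * muInv μmax qmin d₁ < d₂ * muInv μmax qmin d₂ := by
    rw [hw1, hw2]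
    exact frac_strict _ _ _ _ (by positivity) h₁.le h₁₂ hd2μ
  have hw1nn : 0 ≤ d₁ * muInv μmax qmin d₁ := by positivity
  -- phiInv increasing
  have hylt : d₁ / (1 - α) < d₂ / (1 - α) := by
    exact div_lt_div_of_pos_right h₁₂ h1α
  have hphi : phiInv φmax ks (d₁ / (1 - α)) < phiInv φmax ks (d₂ / (1 - α)) := by
    unfold phiInv
    exact frac_strict _ _ _ _ hks (by positivity) hylt hd2φ
  -- rhoInv increasing
  have hrho : rhoInv ρmax kv (d₁ * muInv μmax qmin d₁) <
      rhoInv ρmax kv (d₂ * muInv μmax qmin d₂) := by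
    unfold rhoInv
    exact frac_strict _ _ _ _ hkv hw1nn hwlt hd2ρ
  -- psiInv increasing
  have hpsi : psiInv φmax ks ρmax kv μmax qmin β γ α d₁ <
      psiInv φmax ks ρmax kv μmax qmin β γ α d₂ := by
    unfold psiInv
    have := div_lt_div_of_pos_right hrho habg
    linarith
  -- psiInv d₁ nonneg-ish: need numerator positivity
  have hN2 : 0 < s_in - psiInv φmax ks ρmax kv μmax qmin β γ α d₂ := by linarith
  have hN1 : 0 < s_in - psiInv φmax ks ρmax kv μmax qmin β γ α d₁ := by linarith
  have hD1 : 0 < s_in * muInv μmax qmin d₁ := by positivity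
  have hD2 : 0 < s_in * muInv μmax qmin d₂ := by positivity
  unfold Pyield
  rw [div_lt_div_iff₀ hD2 hD1]
  have hDlt : s_in * muInv μmax qmin d₁ < s_in * muInv μmax qmin d₂ :=
    mul_lt_mul_of_pos_left hmlt hs
  set N₁ := s_in - psiInv φmax ks ρmax kv μmax qmin β γ α d₁ with hN1def
  set N₂ := s_in - psiInv φmax ks ρmax kv μmax qmin β γ α d₂ with hN2def
  set D₁ := s_in * muInv μmax qmin d₁ with hD1def
  set D₂ := s_in * muInv μmax qmin d₂ with hD2def
  have hNlt : N₂ < N₁ := by simp only [hN1def, hN2def]; linarith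
  nlinarith [mul_pos habg (mul_pos hN1 (sub_pos.mpr hDlt)),
    mul_pos habg (mul_pos hD1 (sub_pos.mpr hNlt))]
end

section
/- For every α ∈ (0,1) and every d > 0 in the domain of ψα⁻¹ with ψα⁻¹(d) < s_in, the bioreactor yield satisfies the global strict bound P_yield(α,d) < β·γ/qmin; that is, the supremum β·γ/qmin of the yield over the closed parameter region is approached only at the boundary point (α,d) = (1,0) and is not attained at any admissible interior point. -/
/-- for `α ∈ (0,1)` and `d > 0` admissible with `ψα⁻¹(d) < s_in`,
the yield is strictly below the global supremum `β·γ/qmin`: the supremum is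
approached only at the boundary point `(α,d) = (1,0)` and is not attained at
any admissible interior point. -/
theorem Pyield_lt_global_sup (φmax ks ρmax kv μmax qmin β γ s_in : ℝ)
    (hφ : 0 < φmax) (hks : 0 < ks) (hρ : 0 < ρmax) (hkv : 0 < kv)
    (hμ : 0 < μmax) (hq : 0 < qmin) (hβ : 0 < β) (hγ : 0 < γ) (hs : 0 < s_in)
    (α : ℝ) (hα0 : 0 < α) (hα1 : α < 1)
    (d : ℝ) (hd : 0 < d)
    (hdom : inDom φmax ρmax μmax qmin α d)
    (hfeas : psiInv φmax ks ρmax kv μmax qmin β γ α d < s_in) :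
    Pyield φmax ks ρmax kv μmax qmin β γ s_in α d < β * γ / qmin := by
  obtain ⟨h1, h2, h3⟩ := hdom
  set ψ := psiInv φmax ks ρmax kv μmax qmin β γ α d with hψ
  set M := muInv μmax qmin d with hM
  have hμd : 0 < μmax - d := by linarith
  have hMpos : 0 < M := by
    rw [hM, muInv]; positivity
  have hqM : qmin < M := by
    rw [hM, muInv]
    rw [lt_div_iff₀ hμd]
    nlinarith
  have hy : 0 < d / (1 - α) := div_pos hd (by linarith)
  have hψpos : 0 < ψ := by
    rw [hψ, psiInv]
    have h4 : 0 < phiInv φmax ks (d / (1 - α)) := by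
      rw [phiInv]
      exact div_pos (mul_pos hks hy) (by linarith)
    have h5 : 0 < rhoInv ρmax kv (d * muInv μmax qmin d) := by
      rw [rhoInv]
      have : 0 < d * muInv μmax qmin d := mul_pos hd hMpos
      exact div_pos (mul_pos hkv this) (by linarith [h3])
    have : 0 < rhoInv ρmax kv (d * muInv μmax qmin d) / (α * β * γ) :=
      div_pos h5 (by positivity)
    linarith
  rw [Pyield, ← hψ, ← hM]
  rw [div_lt_div_iff₀ (by positivity) hq]
  have hnum : α * β * γ * (s_in - ψ) < β * γ * s_in := by
    have h6 : α * (s_in - ψ) < s_in := by nlinarith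
    have := mul_lt_mul_of_pos_left h6 (mul_pos hβ hγ)
    nlinarith [this]
  nlinarith [mul_pos (mul_pos hβ hγ) hs, mul_pos hs (sub_pos.mpr hqM)]
end

section
/- For each fixed dilution rate d with 0 < d < μmax and d·μ⁻¹(d) < ρmax, the microalgal productivity α ↦ P_out(α,d) is strictly concave on the open interval (0, 1 − d/φmax): for all α₁ ≠ α₂ in this interval and all t ∈ (0,1), P_out(t·α₁ + (1−t)·α₂, d) > t·P_out(α₁,d) + (1−t)·P_out(α₂,d). -/
/-- Microalgal productivity `P_out(α,d) = α·β·γ·d·(s_in − ψα⁻¹(d))/μ⁻¹(d)`. -/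
noncomputable def Pout (φmax ks ρmax kv μmax qmin β γ s_in α d : ℝ) : ℝ :=
  α * β * γ * d * (s_in - psiInv φmax ks ρmax kv μmax qmin β γ α d) /
    muInv μmax qmin d

lemma aux_frac (A B α₁ α₂ t : ℝ) (hA : 0 < A) (hB : 0 < B)
    (hx1 : 0 < A - B*α₁) (hx2 : 0 < A - B*α₂) (hne : α₁ ≠ α₂)
    (ht0 : 0 < t) (ht1 : t < 1) :
    (t*α₁+(1-t)*α₂)/(A - B*(t*α₁+(1-t)*α₂)) <
      t*(α₁/(A-B*α₁))+(1-t)*(α₂/(A-B*α₂)) := by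
  have hxt : 0 < A - B*(t*α₁+(1-t)*α₂) := by nlinarith
  have hsq : 0 < (α₂-α₁)^2 := by
    have h := sub_ne_zero.mpr hne.symm
    positivity
  rw [mul_div_assoc', mul_div_assoc', div_add_div _ _ hx1.ne' hx2.ne',
    div_lt_div_iff₀ hxt (mul_pos hx1 hx2)]
  nlinarith [mul_pos (mul_pos (mul_pos ht0 (by linarith : (0:ℝ) < 1-t))
    (mul_pos hA hB)) hsq]

lemma Pout_eq (φmax ks ρmax kv μmax qmin β γ s_in α d : ℝ)
    (hα : 0 < α) (h1α : α < 1) (hx : 0 < φmax*(1-α)-d)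
    (hβ : β ≠ 0) (hγ : γ ≠ 0) (hμI : muInv μmax qmin d ≠ 0) :
    Pout φmax ks ρmax kv μmax qmin β γ s_in α d =
      d / muInv μmax qmin d * (β*γ*s_in*α - rhoInv ρmax kv (d * muInv μmax qmin d)
        - β*γ*ks*d*(α/(φmax*(1-α)-d))) := by
  have h1α' : (1:ℝ) - α ≠ 0 := by linarith
  have hden : φmax - d/(1-α) ≠ 0 := by
    have e : φmax - d/(1-α) = (φmax*(1-α)-d)/(1-α) := by field_simp
    rw [e]
    positivity
  unfold Pout psiInv phiInv
  field_simp
  ring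

/-- for fixed `0 < d < μmax` with `d·μ⁻¹(d) < ρmax`, the productivity
`α ↦ P_out(α,d)` is strictly concave on `(0, 1 − d/φmax)`. -/
theorem Pout_strictConcave_in_alpha (φmax ks ρmax kv μmax qmin β γ s_in : ℝ)
    (hφ : 0 < φmax) (hks : 0 < ks) (hρ : 0 < ρmax) (hkv : 0 < kv)
    (hμ : 0 < μmax) (hq : 0 < qmin) (hβ : 0 < β) (hγ : 0 < γ) (hs : 0 < s_in)
    (d : ℝ) (hd0 : 0 < d) (hdμ : d < μmax)
    (hdρ : d * muInv μmax qmin d < ρmax)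
    (α₁ α₂ : ℝ) (h₁ : α₁ ∈ Set.Ioo (0 : ℝ) (1 - d / φmax))
    (h₂ : α₂ ∈ Set.Ioo (0 : ℝ) (1 - d / φmax)) (hne : α₁ ≠ α₂)
    (t : ℝ) (ht : t ∈ Set.Ioo (0 : ℝ) 1) :
    t * Pout φmax ks ρmax kv μmax qmin β γ s_in α₁ d +
        (1 - t) * Pout φmax ks ρmax kv μmax qmin β γ s_in α₂ d <
      Pout φmax ks ρmax kv μmax qmin β γ s_in (t * α₁ + (1 - t) * α₂) d := by
  obtain ⟨hα₁0, hα₁1⟩ := h₁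
  obtain ⟨hα₂0, hα₂1⟩ := h₂
  obtain ⟨ht0, ht1⟩ := ht
  have hdφ : d < φmax := by
    have h01 : d / φmax < 1 := by linarith
    rwa [div_lt_one hφ] at h01
  have hdφ' : 0 < d / φmax := div_pos hd0 hφ
  have hμI : 0 < muInv μmax qmin d := by
    unfold muInv
    exact div_pos (mul_pos hq hμ) (by linarith)
  set αt := t * α₁ + (1 - t) * α₂ with hαt
  have hαt0 : 0 < αt := by nlinarith
  have hαt1 : αt < 1 - d / φmax := by nlinarith
  have hxgen : ∀ α : ℝ, α < 1 - d / φmax → 0 < φmax * (1 - α) - d := by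
    intro α hα
    have : φmax * α < φmax * (1 - d / φmax) := (mul_lt_mul_iff_right₀ hφ).2 hα
    rw [mul_sub, mul_div_cancel₀ _ hφ.ne'] at this
    nlinarith
  have hx1 := hxgen α₁ hα₁1
  have hx2 := hxgen α₂ hα₂1
  have hxt := hxgen αt hαt1
  rw [Pout_eq φmax ks ρmax kv μmax qmin β γ s_in α₁ d hα₁0 (by nlinarith) hx1 hβ.ne' hγ.ne' hμI.ne',
    Pout_eq φmax ks ρmax kv μmax qmin β γ s_in α₂ d hα₂0 (by nlinarith) hx2 hβ.ne' hγ.ne' hμI.ne',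
    Pout_eq φmax ks ρmax kv μmax qmin β γ s_in αt d hαt0 (by nlinarith) hxt hβ.ne' hγ.ne' hμI.ne']
  have e : ∀ α : ℝ, φmax * (1 - α) - d = (φmax - d) - φmax * α := by intro; ring
  have hfrac := aux_frac (φmax - d) φmax α₁ α₂ t (by linarith) hφ
    (by rw [← e]; exact hx1) (by rw [← e]; exact hx2) hne ht0 ht1
  rw [← hαt] at hfrac
  rw [e α₁, e α₂, e αt]
  have hM : 0 < d / muInv μmax qmin d * (β * γ * ks * d) := by positivity
  linarith [mul_pos hM (sub_pos.mpr hfrac)]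
end

section
/- For each fixed dilution rate d with 0 < d < μmax and d·μ⁻¹(d) < ρmax, the bioreactor yield α ↦ P_yield(α,d) is strictly concave on the open interval (0, 1 − d/φmax): for all α₁ ≠ α₂ in this interval and all t ∈ (0,1), P_yield(t·α₁ + (1−t)·α₂, d) > t·P_yield(α₁,d) + (1−t)·P_yield(α₂,d). -/
set_option maxHeartbeats 1000000 in
/-- for fixed `0 < d < μmax` with `d·μ⁻¹(d) < ρmax`, the yield
`α ↦ P_yield(α,d)` is strictly concave on `(0, 1 − d/φmax)`. -/
theorem Pyield_strictConcave_in_alpha (φmax ks ρmax kv μmax qmin β γ s_in : ℝ)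
    (hφ : 0 < φmax) (hks : 0 < ks) (hρ : 0 < ρmax) (hkv : 0 < kv)
    (hμ : 0 < μmax) (hq : 0 < qmin) (hβ : 0 < β) (hγ : 0 < γ) (hs : 0 < s_in)
    (d : ℝ) (hd0 : 0 < d) (hdμ : d < μmax)
    (hdρ : d * muInv μmax qmin d < ρmax)
    (α₁ α₂ : ℝ) (h₁ : α₁ ∈ Set.Ioo (0 : ℝ) (1 - d / φmax))
    (h₂ : α₂ ∈ Set.Ioo (0 : ℝ) (1 - d / φmax)) (hne : α₁ ≠ α₂)
    (t : ℝ) (ht : t ∈ Set.Ioo (0 : ℝ) 1) :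
    t * Pyield φmax ks ρmax kv μmax qmin β γ s_in α₁ d +
        (1 - t) * Pyield φmax ks ρmax kv μmax qmin β γ s_in α₂ d <
      Pyield φmax ks ρmax kv μmax qmin β γ s_in (t * α₁ + (1 - t) * α₂) d := by
  obtain ⟨h₁0, h₁1⟩ := h₁
  obtain ⟨h₂0, h₂1⟩ := h₂
  obtain ⟨ht0, ht1⟩ := ht
  have hμd : 0 < μmax - d := by linarith
  have hM : 0 < muInv μmax qmin d := by
    unfold muInv; positivity
  have hρM : 0 < ρmax - d * muInv μmax qmin d := by linarith
  have hdφ : d < φmax := by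
    have : d / φmax < 1 := by linarith
    calc d = d / φmax * φmax := by field_simp
    _ < 1 * φmax := by apply mul_lt_mul_of_pos_right this hφ
    _ = φmax := by ring
  set R : ℝ := rhoInv ρmax kv (d * muInv μmax qmin d) with hR
  set M : ℝ := muInv μmax qmin d with hMdef
  -- positivity of denominators D α = (1 - α) * φmax - d
  have hD : ∀ α : ℝ, 0 < α → α < 1 - d / φmax → 0 < (1 - α) * φmax - d := by
    intro α hα0 hα1
    have : d / φmax < 1 - α := by linarith
    have := (div_lt_iff₀ hφ).mp this
    nlinarith
  have hD1 := hD α₁ h₁0 h₁1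
  have hD2 := hD α₂ h₂0 h₂1
  have hαt0 : 0 < t * α₁ + (1 - t) * α₂ := by nlinarith
  have hαt1 : t * α₁ + (1 - t) * α₂ < 1 - d / φmax := by nlinarith
  have hDt := hD _ hαt0 hαt1
  -- closed form for Pyield on the interval
  have key : ∀ α : ℝ, 0 < α → α < 1 - d / φmax →
      Pyield φmax ks ρmax kv μmax qmin β γ s_in α d =
        (β * γ * (s_in * α - ks * d * (α / ((1 - α) * φmax - d))) - R) / (s_in * M) := by
    intro α hα0 hα1
    have hDα := hD α hα0 hα1
    have hα1' : α < 1 := by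
      have : 0 < d / φmax := by positivity
      linarith
    have h1α : 0 < 1 - α := by linarith
    have hφα : 0 < φmax - d / (1 - α) := by
      rw [sub_pos, div_lt_iff₀ h1α]
      nlinarith
    have e1 : (1 - α) * φmax - d ≠ 0 := ne_of_gt hDα
    have e2 : φmax - d / (1 - α) ≠ 0 := ne_of_gt hφα
    have e3 : (1 - α) ≠ 0 := ne_of_gt h1α
    have e4 : α ≠ 0 := ne_of_gt hα0
    have e5 : s_in * M ≠ 0 := by positivity
    have e1' : -(α * φmax) - d + φmax ≠ 0 := by intro h; apply e1; linarith
    unfold Pyield psiInv phiInv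
    rw [← hMdef, ← hR]
    rw [div_eq_div_iff (by positivity) e5]
    have hXinv : (-(α * φmax) - d + φmax)⁻¹ * (-(α * φmax) - d + φmax) = 1 :=
      inv_mul_cancel₀ e1'
    field_simp
    linear_combination
  rw [key α₁ h₁0 h₁1, key α₂ h₂0 h₂1, key _ hαt0 hαt1]
  have hSM : 0 < s_in * M := by positivity
  rw [show t * ((β * γ * (s_in * α₁ - ks * d * (α₁ / ((1 - α₁) * φmax - d))) - R) / (s_in * M)) +
      (1 - t) * ((β * γ * (s_in * α₂ - ks * d * (α₂ / ((1 - α₂) * φmax - d))) - R) / (s_in * M)) =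
      (t * (β * γ * (s_in * α₁ - ks * d * (α₁ / ((1 - α₁) * φmax - d))) - R) +
       (1 - t) * (β * γ * (s_in * α₂ - ks * d * (α₂ / ((1 - α₂) * φmax - d))) - R)) / (s_in * M)
      from by ring]
  rw [div_lt_div_iff_of_pos_right hSM]
  -- core convexity of α ↦ α/((1-α)φmax - d)
  have core : t * (α₁ / ((1 - α₁) * φmax - d)) + (1 - t) * (α₂ / ((1 - α₂) * φmax - d)) -
      (t * α₁ + (1 - t) * α₂) / ((1 - (t * α₁ + (1 - t) * α₂)) * φmax - d) =
      t * (1 - t) * φmax * (φmax - d) * (α₁ - α₂) ^ 2 /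
        (((1 - α₁) * φmax - d) * ((1 - α₂) * φmax - d) *
          ((1 - (t * α₁ + (1 - t) * α₂)) * φmax - d)) := by
    rw [eq_div_iff (mul_pos (mul_pos hD1 hD2) hDt).ne']
    have k1 := div_mul_cancel₀ α₁ hD1.ne'
    have k2 := div_mul_cancel₀ α₂ hD2.ne'
    have k3 := div_mul_cancel₀ (t * α₁ + (1 - t) * α₂) hDt.ne'
    linear_combination (t * ((1 - α₂) * φmax - d) * ((1 - (t * α₁ + (1 - t) * α₂)) * φmax - d)) * k1 +
      ((1 - t) * ((1 - α₁) * φmax - d) * ((1 - (t * α₁ + (1 - t) * α₂)) * φmax - d)) * k2 -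
      (((1 - α₁) * φmax - d) * ((1 - α₂) * φmax - d)) * k3
  have hpos : 0 < t * (1 - t) * φmax * (φmax - d) * (α₁ - α₂) ^ 2 /
      (((1 - α₁) * φmax - d) * ((1 - α₂) * φmax - d) *
        ((1 - (t * α₁ + (1 - t) * α₂)) * φmax - d)) := by
    have h12 : α₁ - α₂ ≠ 0 := sub_ne_zero.mpr hne
    have ht' : 0 < 1 - t := by linarith
    have hφd : 0 < φmax - d := by linarith
    positivity
  have hcore : (t * α₁ + (1 - t) * α₂) / ((1 - (t * α₁ + (1 - t) * α₂)) * φmax - d) <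
      t * (α₁ / ((1 - α₁) * φmax - d)) + (1 - t) * (α₂ / ((1 - α₂) * φmax - d)) := by
    linarith [core ▸ hpos]
  have hmul := mul_lt_mul_of_pos_left hcore
    (show (0:ℝ) < β * γ * (ks * d) by positivity)
  linarith [hmul]
end

section
/- Let Z ⊆ ℝⁿ be a convex set, let f₁,…,f_k : ℝⁿ → ℝ be functions each of which is quasiconcave on Z (i.e., f_i(t·x + (1−t)·y) ≥ min(f_i(x), f_i(y)) for all x, y ∈ Z and t ∈ [0,1]), and suppose at least one f_j is strictly quasiconcave on Z (i.e., f_j(t·x + (1−t)·y) > min(f_j(x), f_j(y)) for all x ≠ y in Z and t ∈ (0,1)). Then every locally Pareto optimal point z* ∈ Z for the problem of maximizing (f₁,…,f_k) over Z is globally Pareto optimal: if there exists δ > 0 such that no z ∈ Z with ‖z − z*‖ < δ satisfies f_i(z) ≥ f_i(z*) for all i with strict inequality for some i, then no z ∈ Z at all satisfies f_i(z) ≥ f_i(z*) for all i with strict inequality for some i. -/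
/-- over a convex set `Z ⊆ ℝⁿ`, if each `fᵢ` is quasiconcave on `Z`
and at least one `f_j` is strictly quasiconcave on `Z`, then every locally Pareto
optimal point of the maximization of `(f₁,…,f_k)` over `Z` is globally Pareto
optimal. -/
theorem locally_pareto_implies_globally_pareto (n k : ℕ)
    (Z : Set (EuclideanSpace ℝ (Fin n))) (hZ : Convex ℝ Z)
    (f : Fin k → EuclideanSpace ℝ (Fin n) → ℝ)
    (hquasi : ∀ i : Fin k, ∀ x ∈ Z, ∀ y ∈ Z, ∀ t ∈ Set.Icc (0 : ℝ) 1,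
      min (f i x) (f i y) ≤ f i (t • x + (1 - t) • y))
    (j : Fin k)
    (hstrict : ∀ x ∈ Z, ∀ y ∈ Z, x ≠ y → ∀ t ∈ Set.Ioo (0 : ℝ) 1,
      min (f j x) (f j y) < f j (t • x + (1 - t) • y))
    (zstar : EuclideanSpace ℝ (Fin n)) (hzstar : zstar ∈ Z)
    (hlocal : ∃ δ > (0 : ℝ), ¬ ∃ z ∈ Z, ‖z - zstar‖ < δ ∧
      (∀ i : Fin k, f i zstar ≤ f i z) ∧ (∃ i : Fin k, f i zstar < f i z)) :
    ¬ ∃ z ∈ Z, (∀ i : Fin k, f i zstar ≤ f i z) ∧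
      (∃ i : Fin k, f i zstar < f i z) := by
  rintro ⟨z, hzZ, hall, i, hi⟩
  obtain ⟨δ, hδ, hloc⟩ := hlocal
  have hne : z ≠ zstar := by
    rintro rfl; exact lt_irrefl _ hi
  have hnorm : 0 < ‖z - zstar‖ := by
    simpa [sub_eq_zero] using hne
  set t : ℝ := min (1/2) (δ / (2 * ‖z - zstar‖)) with ht
  have ht0 : 0 < t := lt_min (by norm_num) (by positivity)
  have ht1 : t < 1 := lt_of_le_of_lt (min_le_left _ _) (by norm_num)
  set w := t • z + (1 - t) • zstar with hw
  have hwZ : w ∈ Z := hZ hzZ hzstar ht0.le (by linarith) (by ring)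
  have hwnorm : ‖w - zstar‖ < δ := by
    have : w - zstar = t • (z - zstar) := by
      rw [hw]; module
    rw [this, norm_smul, Real.norm_eq_abs, abs_of_pos ht0]
    calc t * ‖z - zstar‖ ≤ (δ / (2 * ‖z - zstar‖)) * ‖z - zstar‖ := by
          apply mul_le_mul_of_nonneg_right (min_le_right _ _) hnorm.le
      _ = δ / 2 := by field_simp
      _ < δ := by linarith
  apply hloc
  refine ⟨w, hwZ, hwnorm, ?_, j, ?_⟩
  · intro i'
    have := hquasi i' z hzZ zstar hzstar t ⟨ht0.le, ht1.le⟩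
    exact le_trans (le_min (hall i') le_rfl) this
  · have := hstrict z hzZ zstar hzstar hne t ⟨ht0, ht1⟩
    exact lt_of_le_of_lt (le_min (hall j) le_rfl) this
end

section
/- The admissible control set U = {(α,d) ∈ (0,1)×(0,∞) : d is in the domain of ψα⁻¹ and ψα⁻¹(d) < s_in} is a convex subset of ℝ². -/
/-- Admissible set `U = {(α,d) ∈ (0,1)×(0,∞) : d ∈ dom ψα⁻¹, ψα⁻¹(d) < s_in}`. -/
def Uset (φmax ks ρmax kv μmax qmin β γ s_in : ℝ) : Set (ℝ × ℝ) :=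
  {u : ℝ × ℝ | 0 < u.1 ∧ u.1 < 1 ∧ 0 < u.2 ∧
    inDom φmax ρmax μmax qmin u.1 u.2 ∧
    psiInv φmax ks ρmax kv μmax qmin β γ u.1 u.2 < s_in}


lemma bad_aux (φmax α₁ α₂ d₁ d₂ A₁ A₂ G₁ G₂ K : ℝ)
    (hφ : 0 < φmax)
    (hα₁ : 0 < α₁) (hα₂ : 0 < α₂) (hd₁ : 0 < d₁) (hd₂ : 0 < d₂)
    (hA₁ : 0 < A₁) (hA₂ : 0 < A₂) (hG₁ : 0 ≤ G₁) (hG₂ : 0 ≤ G₂)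
    (hA₁e : A₁ = φmax*(1-α₁) - d₁) (hA₂e : A₂ = φmax*(1-α₂) - d₂)
    (hK : 0 ≤ K) (hKe : G₂*d₁ - G₁*d₂ = K*(d₂-d₁))
    (hG : G₁*α₂ < G₂*α₁) (hd : d₂*A₁ < d₁*A₂) (hX : A₂*α₁ < A₁*α₂) : False := by
  have hda : d₂*α₁ < d₁*α₂ := by
    have h1 : (A₂*α₁)*(d₂*A₁) < (A₁*α₂)*(d₁*A₂) :=
      mul_lt_mul'' hX hd (by positivity) (by positivity)
    nlinarith [mul_pos hA₁ hA₂]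
  rcases le_or_gt d₂ d₁ with hdd | hdd
  · have h3 : G₂*d₁ ≤ G₁*d₂ := by nlinarith [mul_nonneg hK (sub_nonneg.mpr hdd)]
    nlinarith [mul_lt_mul_of_pos_right hG hd₁, mul_le_mul_of_nonneg_right h3 hα₁.le,
      mul_nonneg hG₁ (sub_pos.mpr hda).le]
  · have hαα : α₁ < α₂ := by nlinarith [mul_lt_mul_of_pos_right hdd hα₂]
    have hAA : A₂ < A₁ := by rw [hA₁e, hA₂e]; nlinarith [mul_pos hφ (sub_pos.mpr hαα)]
    nlinarith [mul_lt_mul_of_pos_left hAA hd₂, mul_lt_mul_of_pos_right hdd hA₂]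

lemma cross_nonneg (φmax ks s α₁ α₂ d₁ d₂ A₁ A₂ G₁ G₂ K : ℝ)
    (hφ : 0 < φmax) (hks : 0 < ks)
    (hα₁ : 0 < α₁) (hα₂ : 0 < α₂) (hd₁ : 0 < d₁) (hd₂ : 0 < d₂)
    (hA₁ : 0 < A₁) (hA₂ : 0 < A₂) (hG₁ : 0 ≤ G₁) (hG₂ : 0 ≤ G₂)
    (hA₁e : A₁ = φmax*(1-α₁) - d₁) (hA₂e : A₂ = φmax*(1-α₂) - d₂)
    (hK : 0 ≤ K) (hKe : G₂*d₁ - G₁*d₂ = K*(d₂-d₁))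
    (hP₁ : 0 ≤ s*(α₁*A₁) - ks*d₁*α₁ - G₁*A₁)
    (hP₂ : 0 ≤ s*(α₂*A₂) - ks*d₂*α₂ - G₂*A₂) :
    0 ≤ s*α₁*A₂ + s*α₂*A₁ - ks*(d₁*α₂) - ks*(d₂*α₁) - G₁*A₂ - G₂*A₁ := by
  by_contra hR
  push_neg at hR
  set R := s*α₁*A₂ + s*α₂*A₁ - ks*(d₁*α₂) - ks*(d₂*α₁) - G₁*A₂ - G₂*A₁ with hRe
  have hstar : (A₁*α₂ - A₂*α₁)*(G₁*α₂ - G₂*α₁)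
      = α₁*α₂*R - α₂^2*(s*(α₁*A₁) - ks*d₁*α₁ - G₁*A₁)
        - α₁^2*(s*(α₂*A₂) - ks*d₂*α₂ - G₂*A₂) := by rw [hRe]; ring
  have hstar2 : ks*((A₁*α₂ - A₂*α₁)*(d₁*A₂ - d₂*A₁))
      = A₂^2*(s*(α₁*A₁) - ks*d₁*α₁ - G₁*A₁)
        + A₁^2*(s*(α₂*A₂) - ks*d₂*α₂ - G₂*A₂) - A₁*A₂*R := by rw [hRe]; ring
  have hRneg : α₁*α₂*R < 0 := mul_neg_of_pos_of_neg (mul_pos hα₁ hα₂) hR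
  have hRneg2 : A₁*A₂*R < 0 := mul_neg_of_pos_of_neg (mul_pos hA₁ hA₂) hR
  have h1 : (A₁*α₂ - A₂*α₁)*(G₁*α₂ - G₂*α₁) < 0 := by
    rw [hstar]
    nlinarith [mul_nonneg (sq_nonneg α₂) hP₁, mul_nonneg (sq_nonneg α₁) hP₂]
  have h2 : 0 < ks*((A₁*α₂ - A₂*α₁)*(d₁*A₂ - d₂*A₁)) := by
    rw [hstar2]
    nlinarith [mul_nonneg (sq_nonneg A₂) hP₁, mul_nonneg (sq_nonneg A₁) hP₂]
  have h2' : 0 < (A₁*α₂ - A₂*α₁)*(d₁*A₂ - d₂*A₁) := by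
    by_contra h
    push_neg at h
    have := mul_le_mul_of_nonneg_left h hks.le
    simp only [mul_zero] at this
    linarith
  rcases lt_trichotomy (A₁*α₂ - A₂*α₁) 0 with hX | hX | hX
  · have hGgt : G₂*α₁ < G₁*α₂ := by
      rcases mul_neg_iff.mp h1 with ⟨h, h'⟩ | ⟨h, h'⟩ <;> linarith
    have hdgt : d₁*A₂ < d₂*A₁ := by
      rcases mul_pos_iff.mp h2' with ⟨h, h'⟩ | ⟨h, h'⟩ <;> linarith
    exact bad_aux φmax α₂ α₁ d₂ d₁ A₂ A₁ G₂ G₁ K hφ hα₂ hα₁ hd₂ hd₁ hA₂ hA₁ hG₂ hG₁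
      hA₂e hA₁e hK (by linarith) hGgt hdgt (by linarith)
  · rw [hX, zero_mul] at h1
    exact absurd h1 (lt_irrefl 0)
  · have hGlt : G₁*α₂ < G₂*α₁ := by
      rcases mul_neg_iff.mp h1 with ⟨h, h'⟩ | ⟨h, h'⟩ <;> linarith
    have hdlt : d₂*A₁ < d₁*A₂ := by
      rcases mul_pos_iff.mp h2' with ⟨h, h'⟩ | ⟨h, h'⟩ <;> linarith
    exact bad_aux φmax α₁ α₂ d₁ d₂ A₁ A₂ G₁ G₂ K hφ hα₁ hα₂ hd₁ hd₂ hA₁ hA₂ hG₁ hG₂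
      hA₁e hA₂e hK hKe hGlt hdlt (by linarith)

lemma psi_eq (φmax ks ρmax kv μmax qmin β γ α d : ℝ)
    (hα : 0 < α) (h1α : 0 < 1 - α) (hβ : 0 < β) (hγ : 0 < γ)
    (hA : 0 < φmax*(1-α) - d) (hμd : 0 < μmax - d)
    (hE : 0 < ρmax*μmax - (ρmax+qmin*μmax)*d) :
    psiInv φmax ks ρmax kv μmax qmin β γ α d
      = ks*d/(φmax*(1-α)-d) + (kv*qmin*μmax*d/((ρmax*μmax-(ρmax+qmin*μmax)*d)*(β*γ)))/α := by
  have h1 : (1:ℝ) - α ≠ 0 := ne_of_gt h1α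
  have h3 : μmax - d ≠ 0 := ne_of_gt hμd
  have h2 : φmax - d/(1-α) ≠ 0 := by
    have e : φmax - d/(1-α) = (φmax*(1-α)-d)/(1-α) := by field_simp
    rw [e]; exact ne_of_gt (div_pos hA h1α)
  have h4 : ρmax - d*(qmin*μmax/(μmax-d)) ≠ 0 := by
    have e : ρmax - d*(qmin*μmax/(μmax-d)) = (ρmax*μmax-(ρmax+qmin*μmax)*d)/(μmax-d) := by
      field_simp; ring
    rw [e]; exact ne_of_gt (div_pos hE hμd)
  unfold psiInv phiInv rhoInv muInv
  have e1 : ks * (d/(1-α)) / (φmax - d/(1-α)) = ks*d/(φmax*(1-α)-d) := by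
    rw [div_eq_div_iff h2 (ne_of_gt hA)]
    field_simp
  have e2 : kv * (d*(qmin*μmax/(μmax-d))) / (ρmax - d*(qmin*μmax/(μmax-d)))
      = kv*qmin*μmax*d/(ρmax*μmax-(ρmax+qmin*μmax)*d) := by
    rw [div_eq_div_iff h4 (ne_of_gt hE)]
    field_simp
    try ring
  rw [e1, e2, div_div, div_div]
  congr 2
  ring


lemma convex_pos (x a b : ℝ) (hx : 0 ≤ x) (hx1 : x ≤ 1) (ha : 0 < a) (hb : 0 < b) :
    0 < x*a + (1-x)*b := by
  rcases hx.eq_or_lt with h | h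
  · rw [← h]; norm_num; exact hb
  · nlinarith [mul_nonneg (by linarith : (0:ℝ) ≤ 1-x) hb.le, mul_pos h ha]

lemma convex_lt (x a b c : ℝ) (hx : 0 ≤ x) (hx1 : x ≤ 1) (ha : a < c) (hb : b < c) :
    x*a + (1-x)*b < c := by
  rcases lt_or_eq_of_le hx1 with h | h
  · nlinarith [mul_le_mul_of_nonneg_left ha.le hx,
      mul_lt_mul_of_pos_left hb (by linarith : (0:ℝ) < 1-x)]
  · rw [h]; norm_num; exact ha

lemma chord (B C w N d₁ d₂ x : ℝ) (hB : 0 < B) (hC : 0 < C) (hw : 0 < w) (hN : 0 ≤ N)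
    (hx : 0 ≤ x) (hx1 : x ≤ 1) (hE₁ : 0 < B - C*d₁) (hE₂ : 0 < B - C*d₂) :
    N*(x*d₁+(1-x)*d₂)/((B - C*(x*d₁+(1-x)*d₂))*w)
      ≤ x*(N*d₁/((B-C*d₁)*w)) + (1-x)*(N*d₂/((B-C*d₂)*w)) := by
  have hEw : 0 < B - C*(x*d₁+(1-x)*d₂) := by
    have e : B - C*(x*d₁+(1-x)*d₂) = x*(B-C*d₁)+(1-x)*(B-C*d₂) := by ring
    rw [e]; exact convex_pos _ _ _ hx hx1 hE₁ hE₂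
  have e : x*(N*d₁/((B-C*d₁)*w)) + (1-x)*(N*d₂/((B-C*d₂)*w))
      = (x*(N*d₁)*((B-C*d₂)*w) + (1-x)*(N*d₂)*((B-C*d₁)*w))/(((B-C*d₁)*w)*((B-C*d₂)*w)) := by
    rw [← mul_div_assoc, ← mul_div_assoc, div_add_div _ _ (ne_of_gt (mul_pos hE₁ hw)) (ne_of_gt (mul_pos hE₂ hw))]
    ring
  rw [e, div_le_div_iff₀ (mul_pos hEw hw) (mul_pos (mul_pos hE₁ hw) (mul_pos hE₂ hw))]
  nlinarith [mul_nonneg (mul_nonneg (mul_nonneg (mul_nonneg (mul_nonneg (mul_nonneg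
    (mul_nonneg hx (by linarith : (0:ℝ) ≤ 1-x)) hB.le) hC.le) hN) (sq_nonneg (d₁-d₂))) hw.le) hw.le]

set_option maxHeartbeats 1000000 in
/-- the admissible control set `U` is a convex subset of `ℝ²`. -/
theorem Uset_convex (φmax ks ρmax kv μmax qmin β γ s_in : ℝ)
    (hφ : 0 < φmax) (hks : 0 < ks) (hρ : 0 < ρmax) (hkv : 0 < kv)
    (hμ : 0 < μmax) (hq : 0 < qmin) (hβ : 0 < β) (hγ : 0 < γ) (hs : 0 < s_in) :
    Convex ℝ (Uset φmax ks ρmax kv μmax qmin β γ s_in) := by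
  rintro ⟨α₁, d₁⟩ hu ⟨α₂, d₂⟩ hv x y hx hy hxy
  obtain rfl : y = 1 - x := by linarith
  have hx1 : x ≤ 1 := by linarith
  simp only [Uset, Set.mem_setOf_eq, inDom] at hu hv
  obtain ⟨hα₁, hα₁1, hd₁, ⟨hdom₁1, hdom₁2, hdom₁3⟩, hψ₁⟩ := hu
  obtain ⟨hα₂, hα₂1, hd₂, ⟨hdom₂1, hdom₂2, hdom₂3⟩, hψ₂⟩ := hv
  have h1α₁ : 0 < 1 - α₁ := by linarith
  have h1α₂ : 0 < 1 - α₂ := by linarith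
  have hμd₁ : 0 < μmax - d₁ := by linarith
  have hμd₂ : 0 < μmax - d₂ := by linarith
  have hA₁r : 0 < φmax*(1-α₁) - d₁ := by
    have h := (div_lt_iff₀ h1α₁).mp hdom₁1; linarith
  have hA₂r : 0 < φmax*(1-α₂) - d₂ := by
    have h := (div_lt_iff₀ h1α₂).mp hdom₂1; linarith
  have hE₁r : 0 < ρmax*μmax - (ρmax+qmin*μmax)*d₁ := by
    rw [muInv, show d₁*(qmin*μmax/(μmax-d₁)) = d₁*(qmin*μmax)/(μmax-d₁) from
      (mul_div_assoc _ _ _).symm] at hdom₁3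
    have h := (div_lt_iff₀ hμd₁).mp hdom₁3
    linarith [h]
  have hE₂r : 0 < ρmax*μmax - (ρmax+qmin*μmax)*d₂ := by
    rw [muInv, show d₂*(qmin*μmax/(μmax-d₂)) = d₂*(qmin*μmax)/(μmax-d₂) from
      (mul_div_assoc _ _ _).symm] at hdom₂3
    have h := (div_lt_iff₀ hμd₂).mp hdom₂3
    linarith [h]
  -- rewrite the two constraints
  rw [psi_eq φmax ks ρmax kv μmax qmin β γ α₁ d₁ hα₁ h1α₁ hβ hγ hA₁r hμd₁ hE₁r] at hψ₁
  rw [psi_eq φmax ks ρmax kv μmax qmin β γ α₂ d₂ hα₂ h1α₂ hβ hγ hA₂r hμd₂ hE₂r] at hψ₂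
  -- abstract the compound quantities
  obtain ⟨A₁, hA₁e⟩ : ∃ t : ℝ, t = φmax*(1-α₁) - d₁ := ⟨_, rfl⟩
  obtain ⟨A₂, hA₂e⟩ : ∃ t : ℝ, t = φmax*(1-α₂) - d₂ := ⟨_, rfl⟩
  obtain ⟨E₁, hE₁e⟩ : ∃ t : ℝ, t = ρmax*μmax - (ρmax+qmin*μmax)*d₁ := ⟨_, rfl⟩
  obtain ⟨E₂, hE₂e⟩ : ∃ t : ℝ, t = ρmax*μmax - (ρmax+qmin*μmax)*d₂ := ⟨_, rfl⟩
  have hA₁ : 0 < A₁ := by rw [hA₁e]; exact hA₁r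
  have hA₂ : 0 < A₂ := by rw [hA₂e]; exact hA₂r
  have hE₁ : 0 < E₁ := by rw [hE₁e]; exact hE₁r
  have hE₂ : 0 < E₂ := by rw [hE₂e]; exact hE₂r
  rw [← hA₁e, ← hE₁e] at hψ₁
  rw [← hA₂e, ← hE₂e] at hψ₂
  obtain ⟨G₁, hG₁e⟩ : ∃ t : ℝ, t = kv*qmin*μmax*d₁/(E₁*(β*γ)) := ⟨_, rfl⟩
  obtain ⟨G₂, hG₂e⟩ : ∃ t : ℝ, t = kv*qmin*μmax*d₂/(E₂*(β*γ)) := ⟨_, rfl⟩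
  rw [← hG₁e] at hψ₁
  rw [← hG₂e] at hψ₂
  have hβγ : 0 < β*γ := mul_pos hβ hγ
  have hG₁ : 0 ≤ G₁ := by
    rw [hG₁e]; exact div_nonneg (by positivity) (mul_pos hE₁ hβγ).le
  have hG₂ : 0 ≤ G₂ := by
    rw [hG₂e]; exact div_nonneg (by positivity) (mul_pos hE₂ hβγ).le
  -- polynomial form of the two constraints
  have hp₁ : 0 < s_in*(α₁*A₁) - ks*d₁*α₁ - G₁*A₁ := by
    have e : ks*d₁*α₁ + G₁*A₁ = (ks*d₁/A₁ + G₁/α₁)*(α₁*A₁) := by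
      field_simp
      try ring
      try tauto
    have h := mul_lt_mul_of_pos_right hψ₁ (mul_pos hα₁ hA₁)
    rw [← e] at h
    linarith
  have hp₂ : 0 < s_in*(α₂*A₂) - ks*d₂*α₂ - G₂*A₂ := by
    have e : ks*d₂*α₂ + G₂*A₂ = (ks*d₂/A₂ + G₂/α₂)*(α₂*A₂) := by
      field_simp
      try ring
      try tauto
    have h := mul_lt_mul_of_pos_right hψ₂ (mul_pos hα₂ hA₂)
    rw [← e] at h
    linarith
  -- the ratio (K) condition
  have hEdiff : E₁ - E₂ = (ρmax+qmin*μmax)*(d₂-d₁) := by rw [hE₁e, hE₂e]; ring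
  have hKe : G₂*d₁ - G₁*d₂
      = (kv*qmin*μmax*(ρmax+qmin*μmax)*d₁*d₂/((E₁*E₂)*(β*γ)))*(d₂-d₁) := by
    have e1 : G₂*d₁ - G₁*d₂ = kv*qmin*μmax*d₁*d₂*(E₁-E₂)/((E₁*E₂)*(β*γ)) := by
      rw [hG₁e, hG₂e]
      field_simp
    rw [e1, hEdiff, div_mul_eq_mul_div]
    congr 1
    ring
  have hK : 0 ≤ kv*qmin*μmax*(ρmax+qmin*μmax)*d₁*d₂/((E₁*E₂)*(β*γ)) := by
    apply div_nonneg (by positivity)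
    exact (mul_pos (mul_pos hE₁ hE₂) hβγ).le
  -- the cross term
  have hcross := cross_nonneg φmax ks s_in α₁ α₂ d₁ d₂ A₁ A₂ G₁ G₂ _
    hφ hks hα₁ hα₂ hd₁ hd₂ hA₁ hA₂ hG₁ hG₂ hA₁e hA₂e hK hKe hp₁.le hp₂.le
  -- facts about the combined point
  have hαw : 0 < x*α₁ + (1-x)*α₂ := convex_pos _ _ _ hx hx1 hα₁ hα₂
  have hαw1 : x*α₁ + (1-x)*α₂ < 1 := convex_lt _ _ _ _ hx hx1 hα₁1 hα₂1
  have hdw : 0 < x*d₁ + (1-x)*d₂ := convex_pos _ _ _ hx hx1 hd₁ hd₂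
  have h1αw : 0 < 1 - (x*α₁ + (1-x)*α₂) := by linarith
  have hμdw : x*d₁ + (1-x)*d₂ < μmax := convex_lt _ _ _ _ hx hx1 hdom₁2 hdom₂2
  have hAwe : φmax*(1-(x*α₁+(1-x)*α₂)) - (x*d₁+(1-x)*d₂) = x*A₁ + (1-x)*A₂ := by
    rw [hA₁e, hA₂e]; ring
  have hAw : 0 < φmax*(1-(x*α₁+(1-x)*α₂)) - (x*d₁+(1-x)*d₂) := by
    rw [hAwe]; exact convex_pos _ _ _ hx hx1 hA₁ hA₂
  have hEwe : ρmax*μmax - (ρmax+qmin*μmax)*(x*d₁+(1-x)*d₂) = x*E₁ + (1-x)*E₂ := by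
    rw [hE₁e, hE₂e]; ring
  have hEw : 0 < ρmax*μmax - (ρmax+qmin*μmax)*(x*d₁+(1-x)*d₂) := by
    rw [hEwe]; exact convex_pos _ _ _ hx hx1 hE₁ hE₂
  -- the key combined inequality
  have key : ks*(x*d₁+(1-x)*d₂)*(x*α₁+(1-x)*α₂) + (x*G₁+(1-x)*G₂)*(x*A₁+(1-x)*A₂)
      < s_in*((x*α₁+(1-x)*α₂)*(x*A₁+(1-x)*A₂)) := by
    rcases hx.eq_or_lt with h0 | h0
    · rw [← h0]
      norm_num
      linarith [hp₂]
    · rcases lt_or_eq_of_le hx1 with h1 | h1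
      · linarith [mul_pos (mul_pos h0 h0) hp₁,
          mul_pos (mul_pos (by linarith : (0:ℝ) < 1-x) (by linarith : (0:ℝ) < 1-x)) hp₂,
          mul_nonneg (mul_nonneg h0.le (by linarith : (0:ℝ) ≤ 1-x)) hcross]
      · rw [h1]
        norm_num
        linarith [hp₁]
  -- membership of the combined point
  simp only [Uset, Set.mem_setOf_eq, inDom, Prod.smul_mk, Prod.mk_add_mk, smul_eq_mul]
  refine ⟨hαw, hαw1, hdw, ⟨?_, hμdw, ?_⟩, ?_⟩
  · rw [div_lt_iff₀ h1αw]
    linarith [hAw]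
  · rw [muInv, show (x*d₁+(1-x)*d₂)*(qmin*μmax/(μmax-(x*d₁+(1-x)*d₂)))
      = (x*d₁+(1-x)*d₂)*(qmin*μmax)/(μmax-(x*d₁+(1-x)*d₂)) from (mul_div_assoc _ _ _).symm]
    rw [div_lt_iff₀ (by linarith : 0 < μmax - (x*d₁+(1-x)*d₂))]
    linarith [hEw]
  · rw [psi_eq φmax ks ρmax kv μmax qmin β γ _ _ hαw h1αw hβ hγ hAw
      (by linarith : 0 < μmax - (x*d₁+(1-x)*d₂)) hEw]
    have hGw_le : kv*qmin*μmax*(x*d₁+(1-x)*d₂)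
        /((ρmax*μmax-(ρmax+qmin*μmax)*(x*d₁+(1-x)*d₂))*(β*γ)) ≤ x*G₁ + (1-x)*G₂ := by
      rw [hG₁e, hG₂e, hE₁e, hE₂e]
      exact chord (ρmax*μmax) (ρmax+qmin*μmax) (β*γ) (kv*qmin*μmax) d₁ d₂ x
        (by positivity) (by positivity) hβγ (by positivity)
        hx hx1 (by rw [hE₁e] at hE₁; exact hE₁) (by rw [hE₂e] at hE₂; exact hE₂)
    obtain ⟨Gw, hGwe⟩ : ∃ t : ℝ, t = kv*qmin*μmax*(x*d₁+(1-x)*d₂)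
        /((ρmax*μmax-(ρmax+qmin*μmax)*(x*d₁+(1-x)*d₂))*(β*γ)) := ⟨_, rfl⟩
    rw [← hGwe] at hGw_le ⊢
    have hGw : 0 ≤ Gw := by
      rw [hGwe]
      exact div_nonneg (by positivity) (mul_pos hEw hβγ).le
    have hnum : ks*(x*d₁+(1-x)*d₂)*(x*α₁+(1-x)*α₂)
        + Gw*(φmax*(1-(x*α₁+(1-x)*α₂)) - (x*d₁+(1-x)*d₂))
        < s_in*((x*α₁+(1-x)*α₂)*(φmax*(1-(x*α₁+(1-x)*α₂)) - (x*d₁+(1-x)*d₂))) := by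
      rw [hAwe]
      have hAw2 : 0 < x*A₁ + (1-x)*A₂ := hAwe ▸ hAw
      have h := mul_le_mul_of_nonneg_right hGw_le hAw2.le
      linarith [key]
    obtain ⟨Aw, hAwe'⟩ : ∃ t : ℝ, t = φmax*(1-(x*α₁+(1-x)*α₂)) - (x*d₁+(1-x)*d₂) := ⟨_, rfl⟩
    obtain ⟨aw, hawe⟩ : ∃ t : ℝ, t = x*α₁+(1-x)*α₂ := ⟨_, rfl⟩
    rw [← hAwe', ← hawe] at hnum ⊢
    have hAw' : 0 < Aw := by rw [hAwe']; exact hAw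
    have haw' : 0 < aw := by rw [hawe]; exact hαw
    have e : ks*(x*d₁+(1-x)*d₂)/Aw + Gw/aw
        = (ks*(x*d₁+(1-x)*d₂)*aw + Gw*Aw)/(aw*Aw) := by
      field_simp
      try ring
      try tauto
    rw [e, div_lt_iff₀ (mul_pos haw' hAw')]
    linarith [hnum]
end

section
/- The microalgal productivity P_out is logarithmically concave on the admissible set U: the function (α,d) ↦ log P_out(α,d) is concave on U = {(α,d) ∈ (0,1)×(0,∞) : d is in the domain of ψα⁻¹ and ψα⁻¹(d) < s_in}. -/
set_option maxHeartbeats 1000000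

lemma cvx_pos {a b x y : ℝ} (ha : 0 ≤ a) (hb : 0 ≤ b) (hab : a + b = 1)
    (hx : 0 < x) (hy : 0 < y) : 0 < a * x + b * y := by
  rcases lt_or_eq_of_le ha with h | h
  · exact add_pos_of_pos_of_nonneg (mul_pos h hx) (mul_nonneg hb hy.le)
  · have hb1 : b = 1 := by linarith
    rw [← h, hb1]; simpa using hy

lemma cmb_lt {a b x1 x2 y1 y2 : ℝ} (ha : 0 ≤ a) (hb : 0 ≤ b) (hab : a + b = 1)
    (h1 : x1 < y1) (h2 : x2 < y2) : a * x1 + b * x2 < a * y1 + b * y2 := by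
  rcases lt_or_eq_of_le ha with h | h
  · have u1 : a * x1 < a * y1 := (mul_lt_mul_iff_right₀ h).2 h1
    have u2 : b * x2 ≤ b * y2 := mul_le_mul_of_nonneg_left h2.le hb
    linarith
  · have hb1 : b = 1 := by linarith
    rw [← h, hb1]; simpa using h2

/-- First-order gap for `x²/y`. -/
lemma gap1 (X Y S T : ℝ) (hY : 0 < Y) (hT : 0 < T) :
    S^2/T + (2*S/T)*(X-S) - (S^2/T^2)*(Y-T) ≤ X^2/Y := by
  rw [← sub_nonneg]
  have h : X^2/Y - (S^2/T + (2*S/T)*(X-S) - (S^2/T^2)*(Y-T))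
      = (X*T - S*Y)^2/(Y*T^2) := by
    field_simp
    ring
  rw [h]
  positivity

/-- First-order gap for `x²/(y(A−Bx))`. -/
lemma gap2 (A B X Y S T : ℝ) (hX : 0 < X) (hY : 0 < Y) (hS : 0 < S) (hT : 0 < T)
    (hU1 : 0 < A - B*X) (hU2 : 0 < A - B*S) (hB : 0 < B) :
    S^2/(T*(A-B*S)) + (S*(2*A-B*S)/(T*(A-B*S)^2))*(X-S)
      - (S^2/(T^2*(A-B*S)))*(Y-T) ≤ X^2/(Y*(A-B*X)) := by
  have h2A : 0 < 2*A - B*S := by nlinarith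
  have key : 0 ≤ S^2*(A-B*X)*(A-B*S)*Y^2
      - S*(A-B*X)*(2*A*X - B*S*(X+S))*T*Y + X^2*T^2*(A-B*S)^2 := by
    rcases le_or_gt (2*A*X - B*S*(X+S)) 0 with hbr | hbr
    · have t1 : 0 ≤ S^2*(A-B*X)*(A-B*S)*Y^2 := by positivity
      have hm : 0 ≤ -(2*A*X - B*S*(X+S)) := by linarith
      have t2 : 0 ≤ S*(A-B*X)*(-(2*A*X - B*S*(X+S)))*T*Y := by positivity
      have t3 : 0 ≤ X^2*T^2*(A-B*S)^2 := by positivity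
      nlinarith [t1, t2, t3]
    · have hbr' : 0 < X*(2*A-B*S) - B*S^2 := by nlinarith [hbr]
      have hW : 0 ≤ X*(2*A-B*S)^2 - A*B*S^2 := by
        nlinarith [mul_pos h2A hbr', mul_pos (mul_pos hB (mul_pos hS hS)) hU2]
      have hD : 0 ≤ 4*(A-B*S)^3*X^2 - (A-B*X)*(2*A*X-B*S*(X+S))^2 := by
        have idD : 4*(A-B*S)^3*X^2 - (A-B*X)*(2*A*X-B*S*(X+S))^2
            = B*(X-S)^2*(X*(2*A-B*S)^2 - A*B*S^2) := by ring
        rw [idD]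
        exact mul_nonneg (mul_nonneg hB.le (sq_nonneg _)) hW
      have ha2 : 0 < S^2*(A-B*X)*(A-B*S) := by positivity
      have hnn : 0 ≤ 4*(S^2*(A-B*X)*(A-B*S)) *
          (S^2*(A-B*X)*(A-B*S)*Y^2 - S*(A-B*X)*(2*A*X - B*S*(X+S))*T*Y
            + X^2*T^2*(A-B*S)^2) := by
        have id4 : 4*(S^2*(A-B*X)*(A-B*S)) *
            (S^2*(A-B*X)*(A-B*S)*Y^2 - S*(A-B*X)*(2*A*X - B*S*(X+S))*T*Y
              + X^2*T^2*(A-B*S)^2)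
            = (2*(S^2*(A-B*X)*(A-B*S))*Y - S*(A-B*X)*(2*A*X-B*S*(X+S))*T)^2
              + T^2*S^2*(A-B*X)*(4*(A-B*S)^3*X^2 - (A-B*X)*(2*A*X-B*S*(X+S))^2) := by
          ring
        rw [id4]
        have h0 : 0 ≤ T^2*S^2*(A-B*X) := by positivity
        exact add_nonneg (sq_nonneg _) (mul_nonneg h0 hD)
      nlinarith [hnn, ha2]
  rw [← sub_nonneg]
  have h : X^2/(Y*(A-B*X)) - (S^2/(T*(A-B*S)) + (S*(2*A-B*S)/(T*(A-B*S)^2))*(X-S)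
      - (S^2/(T^2*(A-B*S)))*(Y-T))
      = (S^2*(A-B*X)*(A-B*S)*Y^2 - S*(A-B*X)*(2*A*X - B*S*(X+S))*T*Y
          + X^2*T^2*(A-B*S)^2) / (Y*T^2*(A-B*S)^2*(A-B*X)) := by
    have n1 : A - B*X ≠ 0 := hU1.ne'
    have n2 : A - B*S ≠ 0 := hU2.ne'
    have e1 : X^2/(Y*(A-B*X)) = X^2*T^2*(A-B*S)^2 / (Y*T^2*(A-B*S)^2*(A-B*X)) := by
      field_simp
    have e2 : S^2/(T*(A-B*S)) + (S*(2*A-B*S)/(T*(A-B*S)^2))*(X-S)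
        - (S^2/(T^2*(A-B*S)))*(Y-T) = (S^2*Y*T*(A-B*S)*(A-B*X)
          + S*(2*A-B*S)*(X-S)*Y*T*(A-B*X) - S^2*(Y-T)*Y*(A-B*S)*(A-B*X))
          / (Y*T^2*(A-B*S)^2*(A-B*X)) := by
      field_simp
    rw [e1, e2, ← sub_div]
    congr 1
    ring
  rw [h]
  positivity

/-- Closed form of `d·(s_in − ψα⁻¹(d))`. -/
noncomputable def gaux (φmax ks ρmax kv μmax qmin β γ s_in α d : ℝ) : ℝ :=
  s_in * d - ks * (d^2 / (φmax*(1-α) - d))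
    - (kv*qmin*μmax/(β*γ)) * (d^2 / (α*(ρmax*μmax - (ρmax+qmin*μmax)*d)))

lemma g_conc (φmax ks ρmax kv μmax qmin β γ s_in : ℝ)
    (hks : 0 ≤ ks) (hK : 0 ≤ kv*qmin*μmax/(β*γ)) (hBc : 0 < ρmax + qmin*μmax)
    (pα pd qα qd a b : ℝ)
    (hpα : 0 < pα) (hpd : 0 < pd) (hp1 : pd < φmax*(1-pα))
    (hp2 : (ρmax+qmin*μmax)*pd < ρmax*μmax)
    (hqα : 0 < qα) (hqd : 0 < qd) (hq1 : qd < φmax*(1-qα))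
    (hq2 : (ρmax+qmin*μmax)*qd < ρmax*μmax)
    (ha : 0 ≤ a) (hb : 0 ≤ b) (hab : a + b = 1) :
    a * gaux φmax ks ρmax kv μmax qmin β γ s_in pα pd
      + b * gaux φmax ks ρmax kv μmax qmin β γ s_in qα qd
      ≤ gaux φmax ks ρmax kv μmax qmin β γ s_in (a*pα+b*qα) (a*pd+b*qd) := by
  obtain rfl : b = 1 - a := by linarith
  set mα := a*pα + (1-a)*qα with hmα
  set md := a*pd + (1-a)*qd with hmd
  have hmαpos : 0 < mα := cvx_pos ha hb hab hpα hqα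
  have hmdpos : 0 < md := cvx_pos ha hb hab hpd hqd
  have hYp : 0 < φmax*(1-pα) - pd := by linarith
  have hYq : 0 < φmax*(1-qα) - qd := by linarith
  have hTm : 0 < φmax*(1-mα) - md := by
    have h : φmax*(1-mα) - md = a*(φmax*(1-pα) - pd) + (1-a)*(φmax*(1-qα) - qd) := by
      rw [hmα, hmd]; ring
    rw [h]; exact cvx_pos ha hb hab hYp hYq
  have hU1p : 0 < ρmax*μmax - (ρmax+qmin*μmax)*pd := by linarith
  have hU1q : 0 < ρmax*μmax - (ρmax+qmin*μmax)*qd := by linarith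
  have hU1m : 0 < ρmax*μmax - (ρmax+qmin*μmax)*md := by
    have h : ρmax*μmax - (ρmax+qmin*μmax)*md
        = a*(ρmax*μmax - (ρmax+qmin*μmax)*pd)
          + (1-a)*(ρmax*μmax - (ρmax+qmin*μmax)*qd) := by rw [hmd]; ring
    rw [h]; exact cvx_pos ha hb hab hU1p hU1q
  have h1p := gap1 pd (φmax*(1-pα) - pd) md (φmax*(1-mα) - md) hYp hTm
  have h1q := gap1 qd (φmax*(1-qα) - qd) md (φmax*(1-mα) - md) hYq hTm
  have comb1 : md^2/(φmax*(1-mα) - md)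
      ≤ a * (pd^2/(φmax*(1-pα) - pd)) + (1-a) * (qd^2/(φmax*(1-qα) - qd)) := by
    have e : a * (md^2/(φmax*(1-mα) - md)
          + (2*md/(φmax*(1-mα) - md))*(pd-md)
          - (md^2/(φmax*(1-mα) - md)^2)*((φmax*(1-pα) - pd)-(φmax*(1-mα) - md)))
        + (1-a) * (md^2/(φmax*(1-mα) - md)
          + (2*md/(φmax*(1-mα) - md))*(qd-md)
          - (md^2/(φmax*(1-mα) - md)^2)*((φmax*(1-qα) - qd)-(φmax*(1-mα) - md)))
        = md^2/(φmax*(1-mα) - md) := by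
      rw [hmα, hmd]; ring
    linarith [mul_le_mul_of_nonneg_left h1p ha, mul_le_mul_of_nonneg_left h1q hb]
  have h2p := gap2 (ρmax*μmax) (ρmax+qmin*μmax) pd pα md mα hpd hpα hmdpos hmαpos hU1p hU1m hBc
  have h2q := gap2 (ρmax*μmax) (ρmax+qmin*μmax) qd qα md mα hqd hqα hmdpos hmαpos hU1q hU1m hBc
  have comb2 : md^2/(mα*(ρmax*μmax - (ρmax+qmin*μmax)*md))
      ≤ a * (pd^2/(pα*(ρmax*μmax - (ρmax+qmin*μmax)*pd)))
        + (1-a) * (qd^2/(qα*(ρmax*μmax - (ρmax+qmin*μmax)*qd))) := by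
    have e : a * (md^2/(mα*(ρmax*μmax-(ρmax+qmin*μmax)*md))
          + (md*(2*(ρmax*μmax)-(ρmax+qmin*μmax)*md)/(mα*(ρmax*μmax-(ρmax+qmin*μmax)*md)^2))*(pd-md)
          - (md^2/(mα^2*(ρmax*μmax-(ρmax+qmin*μmax)*md)))*(pα-mα))
        + (1-a) * (md^2/(mα*(ρmax*μmax-(ρmax+qmin*μmax)*md))
          + (md*(2*(ρmax*μmax)-(ρmax+qmin*μmax)*md)/(mα*(ρmax*μmax-(ρmax+qmin*μmax)*md)^2))*(qd-md)
          - (md^2/(mα^2*(ρmax*μmax-(ρmax+qmin*μmax)*md)))*(qα-mα))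
        = md^2/(mα*(ρmax*μmax-(ρmax+qmin*μmax)*md)) := by
      rw [hmα, hmd]; ring
    linarith [mul_le_mul_of_nonneg_left h2p ha, mul_le_mul_of_nonneg_left h2q hb]
  unfold gaux
  have eL : a * (s_in*pd - ks*(pd^2/(φmax*(1-pα) - pd))
        - (kv*qmin*μmax/(β*γ))*(pd^2/(pα*(ρmax*μmax - (ρmax+qmin*μmax)*pd))))
      + (1-a) * (s_in*qd - ks*(qd^2/(φmax*(1-qα) - qd))
        - (kv*qmin*μmax/(β*γ))*(qd^2/(qα*(ρmax*μmax - (ρmax+qmin*μmax)*qd))))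
      = s_in*md
        - ks*(a*(pd^2/(φmax*(1-pα) - pd)) + (1-a)*(qd^2/(φmax*(1-qα) - qd)))
        - (kv*qmin*μmax/(β*γ))*(a*(pd^2/(pα*(ρmax*μmax - (ρmax+qmin*μmax)*pd)))
            + (1-a)*(qd^2/(qα*(ρmax*μmax - (ρmax+qmin*μmax)*qd)))) := by
    rw [hmd]; ring
  rw [eL]
  have c1 := mul_le_mul_of_nonneg_left comb1 hks
  have c2 := mul_le_mul_of_nonneg_left comb2 hK
  linarith

lemma gaux_eq (φmax ks ρmax kv μmax qmin β γ s_in α d : ℝ)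
    (hβ : 0 < β) (hγ : 0 < γ) (hq : 0 < qmin) (hμ : 0 < μmax)
    (hα : 0 < α) (hα1 : α < 1) (hd : 0 < d)
    (h1 : d < φmax*(1-α)) (h2 : d < μmax)
    (h3 : (ρmax+qmin*μmax)*d < ρmax*μmax) :
    gaux φmax ks ρmax kv μmax qmin β γ s_in α d
      = d * (s_in - psiInv φmax ks ρmax kv μmax qmin β γ α d) := by
  have h1α : 0 < 1 - α := by linarith
  have n1 : (1:ℝ) - α ≠ 0 := ne_of_gt h1α
  have hphi : 0 < φmax*(1-α) - d := by linarith
  have n6 : φmax*(1-α) - d ≠ 0 := ne_of_gt hphi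
  have n2 : φmax - d/(1-α) ≠ 0 := by
    have h : φmax - d/(1-α) = (φmax*(1-α) - d)/(1-α) := by field_simp
    rw [h]; positivity
  have hμd : 0 < μmax - d := by linarith
  have n3 : μmax - d ≠ 0 := ne_of_gt hμd
  have hrho : 0 < ρmax*μmax - (ρmax+qmin*μmax)*d := by linarith
  have n7 : ρmax*μmax - (ρmax+qmin*μmax)*d ≠ 0 := ne_of_gt hrho
  have n4 : ρmax - d * muInv μmax qmin d ≠ 0 := by
    unfold muInv
    have h : ρmax - d * (qmin * μmax / (μmax - d))
        = (ρmax*μmax - (ρmax+qmin*μmax)*d)/(μmax - d) := by field_simp; ring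
    rw [h]; positivity
  unfold gaux psiInv phiInv rhoInv muInv
  rw [show ρmax - d * (qmin * μmax / (μmax - d))
      = (ρmax*μmax - (ρmax+qmin*μmax)*d)/(μmax - d) from by
    field_simp; ring]
  rw [show φmax - d / (1 - α) = (φmax*(1-α) - d)/(1-α) from by field_simp]
  field_simp
  ring

lemma pout_eq (φmax ks ρmax kv μmax qmin β γ s_in α d : ℝ)
    (hβ : 0 < β) (hγ : 0 < γ) (hq : 0 < qmin) (hμ : 0 < μmax)
    (hα : 0 < α) (hα1 : α < 1) (hd : 0 < d)
    (h1 : d < φmax*(1-α)) (h2 : d < μmax)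
    (h3 : (ρmax+qmin*μmax)*d < ρmax*μmax) :
    Pout φmax ks ρmax kv μmax qmin β γ s_in α d
      = (β*γ/(qmin*μmax)) *
        (α * ((μmax - d) * gaux φmax ks ρmax kv μmax qmin β γ s_in α d)) := by
  rw [gaux_eq φmax ks ρmax kv μmax qmin β γ s_in α d hβ hγ hq hμ hα hα1 hd h1 h2 h3]
  unfold Pout muInv
  have n3 : μmax - d ≠ 0 := ne_of_gt (by linarith : (0:ℝ) < μmax - d)
  field_simp

lemma memU_iff (φmax ks ρmax kv μmax qmin β γ s_in : ℝ)
    (hβ : 0 < β) (hγ : 0 < γ) (hq : 0 < qmin) (hμ : 0 < μmax) (u : ℝ × ℝ) :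
    u ∈ Uset φmax ks ρmax kv μmax qmin β γ s_in ↔
      (0 < u.1 ∧ u.1 < 1 ∧ 0 < u.2 ∧ u.2 < φmax*(1-u.1) ∧ u.2 < μmax ∧
        (ρmax+qmin*μmax)*u.2 < ρmax*μmax ∧
        0 < gaux φmax ks ρmax kv μmax qmin β γ s_in u.1 u.2) := by
  unfold Uset inDom
  simp only [Set.mem_setOf_eq]
  constructor
  · rintro ⟨h1, h2, h3, ⟨h4, h5, h6⟩, h7⟩
    have h1u : 0 < 1 - u.1 := by linarith
    have hφ' : u.2 < φmax*(1-u.1) := by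
      have := (div_lt_iff₀ h1u).1 h4; linarith
    have hμd : 0 < μmax - u.2 := by linarith
    have hB : (ρmax+qmin*μmax)*u.2 < ρmax*μmax := by
      unfold muInv at h6
      rw [show u.2 * (qmin * μmax / (μmax - u.2)) = u.2*(qmin*μmax)/(μmax - u.2) from by ring] at h6
      have := (div_lt_iff₀ hμd).1 h6
      nlinarith
    refine ⟨h1, h2, h3, hφ', h5, hB, ?_⟩
    rw [gaux_eq φmax ks ρmax kv μmax qmin β γ s_in u.1 u.2 hβ hγ hq hμ h1 h2 h3 hφ' h5 hB]
    have : 0 < s_in - psiInv φmax ks ρmax kv μmax qmin β γ u.1 u.2 := by linarith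
    positivity
  · rintro ⟨h1, h2, h3, h4, h5, h6, h7⟩
    have h1u : 0 < 1 - u.1 := by linarith
    have hμd : 0 < μmax - u.2 := by linarith
    have hd1 : u.2 / (1 - u.1) < φmax := by
      rw [div_lt_iff₀ h1u]; linarith
    have hd3 : u.2 * muInv μmax qmin u.2 < ρmax := by
      unfold muInv
      rw [show u.2 * (qmin * μmax / (μmax - u.2)) = u.2*(qmin*μmax)/(μmax - u.2) from by ring,
        div_lt_iff₀ hμd]
      nlinarith
    refine ⟨h1, h2, h3, ⟨hd1, h5, hd3⟩, ?_⟩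
    rw [gaux_eq φmax ks ρmax kv μmax qmin β γ s_in u.1 u.2 hβ hγ hq hμ h1 h2 h3 h4 h5 h6] at h7
    nlinarith [h7]

/-- `P_out` is logarithmically concave on `U`, i.e.
`(α,d) ↦ log P_out(α,d)` is concave on `U`. -/
theorem log_Pout_concave (φmax ks ρmax kv μmax qmin β γ s_in : ℝ)
    (hφ : 0 < φmax) (hks : 0 < ks) (hρ : 0 < ρmax) (hkv : 0 < kv)
    (hμ : 0 < μmax) (hq : 0 < qmin) (hβ : 0 < β) (hγ : 0 < γ) (hs : 0 < s_in) :
    ConcaveOn ℝ (Uset φmax ks ρmax kv μmax qmin β γ s_in)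
      (fun u : ℝ × ℝ =>
        Real.log (Pout φmax ks ρmax kv μmax qmin β γ s_in u.1 u.2)) := by
  have hBc : 0 < ρmax + qmin*μmax := by positivity
  have hK : 0 ≤ kv*qmin*μmax/(β*γ) := by positivity
  have hUconv : Convex ℝ (Uset φmax ks ρmax kv μmax qmin β γ s_in) := by
    intro p hp q hqm a b ha hb hab
    rw [memU_iff φmax ks ρmax kv μmax qmin β γ s_in hβ hγ hq hμ] at hp hqm ⊢
    simp only [Prod.fst_add, Prod.snd_add, Prod.smul_fst, Prod.smul_snd, smul_eq_mul]
    obtain ⟨hp1, hp2, hp3, hp4, hp5, hp6, hp7⟩ := hp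
    obtain ⟨hq1, hq2, hq3, hq4, hq5, hq6, hq7⟩ := hqm
    obtain rfl : b = 1 - a := by linarith
    have hab' : a + (1 - a) = 1 := by ring
    refine ⟨cvx_pos ha hb hab' hp1 hq1, ?_, cvx_pos ha hb hab' hp3 hq3, ?_, ?_, ?_, ?_⟩
    · have := cvx_pos ha hb hab' (by linarith : (0:ℝ) < 1 - p.1)
        (by linarith : (0:ℝ) < 1 - q.1)
      linarith
    · have h := cmb_lt ha hb hab' hp4 hq4
      nlinarith [h]
    · have h := cmb_lt ha hb hab' hp5 hq5
      linarith
    · have h := cmb_lt ha hb hab' hp6 hq6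
      nlinarith [h]
    · have h := g_conc φmax ks ρmax kv μmax qmin β γ s_in hks.le hK hBc
        p.1 p.2 q.1 q.2 a (1-a) hp1 hp3 hp4 hp6 hq1 hq3 hq4 hq6 ha hb hab'
      have pos := cvx_pos ha hb hab' hp7 hq7
      linarith
  refine ⟨hUconv, ?_⟩
  intro p hp q hqm a b ha hb hab
  have hm := hUconv hp hqm ha hb hab
  rw [memU_iff φmax ks ρmax kv μmax qmin β γ s_in hβ hγ hq hμ] at hp hqm hm
  simp only [Prod.fst_add, Prod.snd_add, Prod.smul_fst, Prod.smul_snd, smul_eq_mul] at hm ⊢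
  obtain ⟨hp1, hp2, hp3, hp4, hp5, hp6, hp7⟩ := hp
  obtain ⟨hq1, hq2, hq3, hq4, hq5, hq6, hq7⟩ := hqm
  obtain rfl : b = 1 - a := by linarith
  have hab' : a + (1 - a) = 1 := by ring
  obtain ⟨hm1, hm2, hm3, hm4, hm5, hm6, hm7⟩ := hm
  have dec : ∀ α d : ℝ, 0 < α → α < 1 → 0 < d → d < φmax*(1-α) → d < μmax →
      (ρmax+qmin*μmax)*d < ρmax*μmax →
      0 < gaux φmax ks ρmax kv μmax qmin β γ s_in α d →
      Real.log (Pout φmax ks ρmax kv μmax qmin β γ s_in α d)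
        = Real.log (β*γ/(qmin*μmax)) + Real.log α + Real.log (μmax - d)
          + Real.log (gaux φmax ks ρmax kv μmax qmin β γ s_in α d) := by
    intro α d h1 h2 h3 h4 h5 h6 h7
    have hμd : 0 < μmax - d := by linarith
    have hc : (0:ℝ) < β*γ/(qmin*μmax) := by positivity
    rw [pout_eq φmax ks ρmax kv μmax qmin β γ s_in α d hβ hγ hq hμ h1 h2 h3 h4 h5 h6,
      Real.log_mul (ne_of_gt hc) (ne_of_gt (mul_pos h1 (mul_pos hμd h7))),
      Real.log_mul (ne_of_gt h1) (ne_of_gt (mul_pos hμd h7)),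
      Real.log_mul (ne_of_gt hμd) (ne_of_gt h7)]
    ring
  rw [dec p.1 p.2 hp1 hp2 hp3 hp4 hp5 hp6 hp7,
    dec q.1 q.2 hq1 hq2 hq3 hq4 hq5 hq6 hq7,
    dec (a*p.1+(1-a)*q.1) (a*p.2+(1-a)*q.2) hm1 hm2 hm3 hm4 hm5 hm6 hm7]
  have lc : ConcaveOn ℝ (Set.Ioi 0) Real.log := strictConcaveOn_log_Ioi.concaveOn
  have l1 := lc.2 (Set.mem_Ioi.2 hp1) (Set.mem_Ioi.2 hq1) ha hb hab'
  simp only [smul_eq_mul] at l1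
  have l2 := lc.2 (Set.mem_Ioi.2 (by linarith : (0:ℝ) < μmax - p.2))
    (Set.mem_Ioi.2 (by linarith : (0:ℝ) < μmax - q.2)) ha hb hab'
  simp only [smul_eq_mul] at l2
  have e2 : a*(μmax-p.2)+(1-a)*(μmax-q.2) = μmax - (a*p.2+(1-a)*q.2) := by ring
  rw [e2] at l2
  have l3a := lc.2 (Set.mem_Ioi.2 hp7) (Set.mem_Ioi.2 hq7) ha hb hab'
  simp only [smul_eq_mul] at l3a
  have l3b : Real.log (a * gaux φmax ks ρmax kv μmax qmin β γ s_in p.1 p.2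
        + (1-a) * gaux φmax ks ρmax kv μmax qmin β γ s_in q.1 q.2)
      ≤ Real.log (gaux φmax ks ρmax kv μmax qmin β γ s_in
          (a*p.1+(1-a)*q.1) (a*p.2+(1-a)*q.2)) :=
    Real.log_le_log (cvx_pos ha hb hab' hp7 hq7)
      (g_conc φmax ks ρmax kv μmax qmin β γ s_in hks.le hK hBc
        p.1 p.2 q.1 q.2 a (1-a) hp1 hp3 hp4 hp6 hq1 hq3 hq4 hq6 ha hb hab')
  have l3 := le_trans l3a l3b
  linarith
end

section
/- Fix α ∈ (0,1), a dilution rate d > 0 in the domain of ψα⁻¹, and s_in > 0, and define s* = φ⁻¹(d/(1−α)), e* = (1−α)·γ·(s_in − s*), v* = ρ⁻¹(d·μ⁻¹(d)), q* = μ⁻¹(d), and c* = (α·β·γ·(s_in − s*) − v*)/q*. Then (s*, e*, v*, q*, c*) is an equilibrium of the consortium dynamics: −(1/γ)·φ(s*)·e* + d·(s_in − s*) = 0, (1−α)·φ(s*)·e* − d·e* = 0, α·β·φ(s*)·e* − ρ(v*)·c* − d·v* = 0, ρ(v*) − μ(q*)·q* = 0, and μ(q*)·c* − d·c* = 0. 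-/
/-- Monod bacterial growth rate `φ(s) = φmax·s/(ks + s)`. -/
noncomputable def phiRate (φmax ks s : ℝ) : ℝ := φmax * s / (ks + s)

/-- Vitamin uptake rate `ρ(v) = ρmax·v/(kv + v)`. -/
noncomputable def rhoRate (ρmax kv v : ℝ) : ℝ := ρmax * v / (kv + v)

/-- Droop algal growth rate `μ(q) = μmax·(1 − qmin/q)`. -/
noncomputable def muRate (μmax qmin q : ℝ) : ℝ := μmax * (1 - qmin / q)

lemma phiRate_phiInv (φmax ks y : ℝ) (hks : 0 < ks) (hy : 0 ≤ y) (hyφ : y < φmax) :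
    phiRate φmax ks (phiInv φmax ks y) = y := by
  have hne : φmax - y ≠ 0 := by linarith
  have hsum : ks + phiInv φmax ks y = ks * φmax / (φmax - y) := by
    unfold phiInv; field_simp; ring
  have hφpos : 0 < φmax := lt_of_le_of_lt hy hyφ
  have hsne : ks * φmax / (φmax - y) ≠ 0 := by
    apply div_ne_zero (by positivity) hne
  unfold phiRate phiInv
  rw [show ks + ks * y / (φmax - y) = ks * φmax / (φmax - y) from hsum]
  field_simp

lemma muRate_muInv (μmax qmin d : ℝ) (hμ : 0 < μmax) (hq : 0 < qmin) (hd : 0 < d)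
    (hdμ : d < μmax) : muRate μmax qmin (muInv μmax qmin d) = d := by
  have hpos : (0:ℝ) < μmax - d := by linarith
  have hne : μmax - d ≠ 0 := ne_of_gt hpos
  have hqpos : 0 < qmin * μmax / (μmax - d) := by positivity
  unfold muRate muInv
  field_simp
  ring

lemma rhoRate_rhoInv (ρmax kv w : ℝ) (hkv : 0 < kv) (hw : 0 ≤ w) (hwρ : w < ρmax) :
    rhoRate ρmax kv (rhoInv ρmax kv w) = w := by
  have hne : ρmax - w ≠ 0 := by linarith
  have hρpos : 0 < ρmax := lt_of_le_of_lt hw hwρ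
  have hsum : kv + rhoInv ρmax kv w = kv * ρmax / (ρmax - w) := by
    unfold rhoInv; field_simp; ring
  unfold rhoRate rhoInv
  rw [show kv + kv * w / (ρmax - w) = kv * ρmax / (ρmax - w) from hsum]
  have hsne : kv * ρmax / (ρmax - w) ≠ 0 := div_ne_zero (by positivity) hne
  field_simp

/-- the coexistence point `(s*, e*, v*, q*, c*)` is an equilibrium
of the consortium dynamics. -/
theorem coexistence_equilibrium (φmax ks ρmax kv μmax qmin β γ : ℝ)
    (hφ : 0 < φmax) (hks : 0 < ks) (hρ : 0 < ρmax) (hkv : 0 < kv)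
    (hμ : 0 < μmax) (hq : 0 < qmin) (hβ : 0 < β) (hγ : 0 < γ)
    (α : ℝ) (hα0 : 0 < α) (hα1 : α < 1)
    (d : ℝ) (hd : 0 < d) (hdom : inDom φmax ρmax μmax qmin α d)
    (s_in : ℝ) (hs : 0 < s_in)
    (sstar estar vstar qstar cstar : ℝ)
    (hsstar : sstar = phiInv φmax ks (d / (1 - α)))
    (hestar : estar = (1 - α) * γ * (s_in - sstar))
    (hvstar : vstar = rhoInv ρmax kv (d * muInv μmax qmin d))
    (hqstar : qstar = muInv μmax qmin d)
    (hcstar : cstar = (α * β * γ * (s_in - sstar) - vstar) / qstar) :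
    -(1 / γ) * phiRate φmax ks sstar * estar + d * (s_in - sstar) = 0 ∧
    (1 - α) * phiRate φmax ks sstar * estar - d * estar = 0 ∧
    α * β * phiRate φmax ks sstar * estar - rhoRate ρmax kv vstar * cstar -
      d * vstar = 0 ∧
    rhoRate ρmax kv vstar - muRate μmax qmin qstar * qstar = 0 ∧
    muRate μmax qmin qstar * cstar - d * cstar = 0 := by
  obtain ⟨h1, h2, h3⟩ := hdom
  have hα : (0:ℝ) < 1 - α := by linarith
  have hy0 : 0 ≤ d / (1 - α) := by positivity
  have hqs : 0 < qstar := by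
    rw [hqstar]; unfold muInv
    have : (0:ℝ) < μmax - d := by linarith
    positivity
  have hw0 : 0 ≤ d * muInv μmax qmin d := by
    have := hqs; rw [hqstar] at this; positivity
  have hphi : phiRate φmax ks sstar = d / (1 - α) := by
    rw [hsstar]; exact phiRate_phiInv _ _ _ hks hy0 h1
  have hrho : rhoRate ρmax kv vstar = d * muInv μmax qmin d := by
    rw [hvstar]; exact rhoRate_rhoInv _ _ _ hkv hw0 h3
  have hmu : muRate μmax qmin qstar = d := by
    rw [hqstar]; exact muRate_muInv _ _ _ hμ hq hd h2
  have hcq : cstar * qstar = α * β * γ * (s_in - sstar) - vstar := by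
    rw [hcstar]; field_simp
  refine ⟨?_, ?_, ?_, ?_, ?_⟩
  · rw [hphi, hestar]; field_simp; ring
  · rw [hphi, hestar]; field_simp; ring
  · rw [hphi, hrho, hestar, hqstar] at *
    have key : α * β * (d / (1 - α)) * ((1 - α) * γ * (s_in - sstar))
        = d * (α * β * γ * (s_in - sstar)) := by field_simp
    rw [key]
    linear_combination (-d) * hcq
  · rw [hrho, hmu, hqstar]; ring
  · rw [hmu]; ring
end

section
/- Fix α ∈ (0,1), s_in > 0, and a dilution rate d > 0 with d/(1−α) < φmax and d < (1−α)·φ(s_in), and define s* = φ⁻¹(d/(1−α)), e* = (1−α)·γ·(s_in − s*), v_in* = α·β·γ·(s_in − s*), and q₀ = qmin + ρ(v_in*)/μmax. Then the algal-washout point (s*, e*, v_in*, q₀, 0) is an equilibrium of the consortium dynamics: −(1/γ)·φ(s*)·e* + d·(s_in − s*) = 0, (1−α)·φ(s*)·e* − d·e* = 0, α·β·φ(s*)·e* − ρ(v_in*)·0 − d·v_in* = 0, ρ(v_in*) − μ(q₀)·q₀ = 0, and μ(q₀)·0 − d·0 = 0. -/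
/-- the algal-washout point `(s*, e*, v_in*, q₀, 0)` is an
equilibrium of the consortium dynamics. -/
theorem algal_washout_equilibrium (φmax ks ρmax kv μmax qmin β γ : ℝ)
    (hφ : 0 < φmax) (hks : 0 < ks) (hρ : 0 < ρmax) (hkv : 0 < kv)
    (hμ : 0 < μmax) (hq : 0 < qmin) (hβ : 0 < β) (hγ : 0 < γ)
    (α : ℝ) (hα0 : 0 < α) (hα1 : α < 1)
    (s_in : ℝ) (hs : 0 < s_in)
    (d : ℝ) (hd : 0 < d) (hdφ : d / (1 - α) < φmax)
    (hdwash : d < (1 - α) * phiRate φmax ks s_in)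
    (sstar estar vinstar q0 : ℝ)
    (hsstar : sstar = phiInv φmax ks (d / (1 - α)))
    (hestar : estar = (1 - α) * γ * (s_in - sstar))
    (hvinstar : vinstar = α * β * γ * (s_in - sstar))
    (hq0 : q0 = qmin + rhoRate ρmax kv vinstar / μmax) :
    -(1 / γ) * phiRate φmax ks sstar * estar + d * (s_in - sstar) = 0 ∧
    (1 - α) * phiRate φmax ks sstar * estar - d * estar = 0 ∧
    α * β * phiRate φmax ks sstar * estar - rhoRate ρmax kv vinstar * 0 -
      d * vinstar = 0 ∧
    rhoRate ρmax kv vinstar - muRate μmax qmin q0 * q0 = 0 ∧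
    muRate μmax qmin q0 * 0 - d * 0 = 0 := by
  have h1α : (0:ℝ) < 1 - α := by linarith
  set y := d / (1 - α) with hy
  have hy0 : 0 < y := div_pos hd h1α
  have hyd : (1 - α) * y = d := by rw [hy]; field_simp
  have hden : 0 < φmax - y := by linarith
  have hs0 : 0 < sstar := by rw [hsstar, phiInv]; positivity
  have h1 : ks + sstar ≠ 0 := by positivity
  have key : phiRate φmax ks sstar = y := by
    rw [phiRate, div_eq_iff h1, hsstar, phiInv]
    field_simp
    ring
  -- s* < s_in
  have hφin : y < φmax * s_in / (ks + s_in) := by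
    have : d < (1 - α) * (φmax * s_in / (ks + s_in)) := by
      simpa [phiRate] using hdwash
    rw [hy, div_lt_iff₀ h1α]
    linarith [this]
  have hss : sstar < s_in := by
    rw [hsstar, phiInv, div_lt_iff₀ hden]
    have h2 : (0:ℝ) < ks + s_in := by positivity
    rw [lt_div_iff₀ h2] at hφin
    nlinarith [hφin]
  have hv0 : 0 < vinstar := by
    rw [hvinstar]
    have : 0 < s_in - sstar := by linarith
    positivity
  have hρ0 : 0 < rhoRate ρmax kv vinstar := by
    rw [rhoRate]; positivity
  have hq00 : 0 < q0 := by
    rw [hq0]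
    have : 0 < rhoRate ρmax kv vinstar / μmax := by positivity
    linarith
  refine ⟨?_, ?_, ?_, ?_, ?_⟩
  · rw [key, hestar]
    have hγ' : γ ≠ 0 := ne_of_gt hγ
    have h' : (1 - α) ≠ 0 := ne_of_gt h1α
    field_simp [hy]
    linear_combination (sstar - s_in) * hyd
  · rw [key]
    linear_combination estar * hyd
  · rw [key, hestar, hvinstar]
    linear_combination (α * β * γ * (s_in - sstar)) * hyd
  · rw [muRate, hq0]
    have hμ' : μmax ≠ 0 := ne_of_gt hμ
    have hq0' : qmin + rhoRate ρmax kv vinstar / μmax ≠ 0 := by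
      rw [← hq0]; exact ne_of_gt hq00
    field_simp
    ring
  · ring
end

section
/- Fix α ∈ (0,1), s_in > 0, and a dilution rate d > 0 in the domain of ψα⁻¹, and define s* = φ⁻¹(d/(1−α)), v* = ρ⁻¹(d·μ⁻¹(d)), q* = μ⁻¹(d), and the coexistence algal biomass c* = (α·β·γ·(s_in − s*) − v*)/q*. Then c* > 0 if and only if ψα⁻¹(d) < s_in. -/
/-- the coexistence algal biomass `c*` is positive if and only if
`ψα⁻¹(d) < s_in`. -/
theorem cstar_pos_iff (φmax ks ρmax kv μmax qmin β γ : ℝ)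
    (hφ : 0 < φmax) (hks : 0 < ks) (hρ : 0 < ρmax) (hkv : 0 < kv)
    (hμ : 0 < μmax) (hq : 0 < qmin) (hβ : 0 < β) (hγ : 0 < γ)
    (α : ℝ) (hα0 : 0 < α) (hα1 : α < 1)
    (s_in : ℝ) (hs : 0 < s_in)
    (d : ℝ) (hd : 0 < d) (hdom : inDom φmax ρmax μmax qmin α d)
    (sstar vstar qstar cstar : ℝ)
    (hsstar : sstar = phiInv φmax ks (d / (1 - α)))
    (hvstar : vstar = rhoInv ρmax kv (d * muInv μmax qmin d))
    (hqstar : qstar = muInv μmax qmin d)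
    (hcstar : cstar = (α * β * γ * (s_in - sstar) - vstar) / qstar) :
    0 < cstar ↔ psiInv φmax ks ρmax kv μmax qmin β γ α d < s_in := by
  have hA : 0 < α * β * γ := by positivity
  have hqpos : 0 < muInv μmax qmin d := by
    unfold muInv
    apply div_pos (by positivity)
    linarith [hdom.2.1]
  rw [hcstar, hqstar, hsstar, hvstar, psiInv]
  set s := phiInv φmax ks (d / (1 - α)) with hs'
  set v := rhoInv ρmax kv (d * muInv μmax qmin d) with hv'
  set q := muInv μmax qmin d with hq'
  rw [div_pos_iff]
  constructor
  · rintro (⟨h1, _⟩ | ⟨_, h2⟩)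
    · have h3 : v / (α * β * γ) < s_in - s := by
        rw [div_lt_iff₀ hA]; nlinarith
      linarith
    · linarith
  · intro h
    left
    constructor
    · have h3 : v / (α * β * γ) < s_in - s := by linarith
      rw [div_lt_iff₀ hA] at h3
      nlinarith
    · exact hqpos
end
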